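/- On so(3,1) with structure equations de¹ = e²³ - e⁵⁶, de² = -e¹³ + e⁴⁶, de³ = e¹² - e⁴⁵, de⁴ = e²⁶, de⁵ = e³⁴, de⁶ = e¹⁵, the pair ω = e¹⁴ + e²⁵ - e³⁶, ρ = -e¹²⁶ - e¹³⁵ + e²³⁴ + e⁴⁵⁶ satisfies dρ = 0 and d(ω∧ω) = 0. -/
import Mathlib


/-!
STATEMENT 10: On so(3,1) with structure equations de¹ = e²³ - e⁵⁶, de² = -e¹³ + e⁴⁶,
de³ = e¹² - e⁴⁵, de⁴ = e²⁶, de⁵ = e³⁴, de⁶ = e¹⁵, the pair ω = e¹⁴ + e²⁵ - e³⁶,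
ρ = -e¹²⁶ - e¹³⁵ + e²³⁴ + e⁴⁵⁶ satisfies dρ = 0 and d(ω∧ω) = 0.

Model: indices shifted to 0,…,5; forms encoded by basis values; d is the
Chevalley–Eilenberg differential; ω∧ω via the shuffle formula.
-/

/-- Value of e^a ∧ e^b on (e_i, e_j). -/
def wf (a b i j : Fin 6) : ℝ :=
  (if a = i then (1:ℝ) else 0) * (if b = j then (1:ℝ) else 0) -
  (if a = j then (1:ℝ) else 0) * (if b = i then (1:ℝ) else 0)

/-- Value of e^a ∧ e^b ∧ e^c on (e_i, e_j, e_k). -/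
def tf (a b c i j k : Fin 6) : ℝ :=
  (if a = i then (1:ℝ) else 0) * ((if b = j then (1:ℝ) else 0) * (if c = k then (1:ℝ) else 0)
      - (if b = k then (1:ℝ) else 0) * (if c = j then (1:ℝ) else 0))
  - (if a = j then (1:ℝ) else 0) * ((if b = i then (1:ℝ) else 0) * (if c = k then (1:ℝ) else 0)
      - (if b = k then (1:ℝ) else 0) * (if c = i then (1:ℝ) else 0))
  + (if a = k then (1:ℝ) else 0) * ((if b = i then (1:ℝ) else 0) * (if c = j then (1:ℝ) else 0)
      - (if b = j then (1:ℝ) else 0) * (if c = i then (1:ℝ) else 0))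

/-- Structure equations of so(3,1). -/
def dSO31 (k i j : Fin 6) : ℝ :=
  if k = 0 then wf 1 2 i j - wf 4 5 i j
  else if k = 1 then -(wf 0 2 i j) + wf 3 5 i j
  else if k = 2 then wf 0 1 i j - wf 3 4 i j
  else if k = 3 then wf 1 5 i j
  else if k = 4 then wf 2 3 i j
  else wf 0 4 i j

/-- Structure constants: the e^m-coefficient of [e_i,e_j] is -(de^m)(e_i,e_j). -/
def BcSO31 (m i j : Fin 6) : ℝ := -(dSO31 m i j)

/-- Coefficients of ω = e¹⁴ + e²⁵ - e³⁶. -/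
def omSO (i j : Fin 6) : ℝ := wf 0 3 i j + wf 1 4 i j - wf 2 5 i j

/-- Coefficients of ρ = -e¹²⁶ - e¹³⁵ + e²³⁴ + e⁴⁵⁶. -/
def rhoSO (i j k : Fin 6) : ℝ :=
  -(tf 0 1 5 i j k) - tf 0 2 4 i j k + tf 1 2 3 i j k + tf 3 4 5 i j k

/-- Basis values of ω∧ω. -/
noncomputable def omomSO (i j k l : Fin 6) : ℝ :=
  (1/4 : ℝ) * ∑ σ : Equiv.Perm (Fin 4),
    ((Equiv.Perm.sign σ : ℤ) : ℝ) *
      omSO (![i,j,k,l] (σ 0)) (![i,j,k,l] (σ 1)) * omSO (![i,j,k,l] (σ 2)) (![i,j,k,l] (σ 3))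

/-- CE differential of a 3-form, evaluated on a basis 4-tuple. -/
def d3SO (r : Fin 6 → Fin 6 → Fin 6 → ℝ) (a b c d : Fin 6) : ℝ :=
  -(∑ m : Fin 6, BcSO31 m a b * r m c d) + (∑ m : Fin 6, BcSO31 m a c * r m b d)
  - (∑ m : Fin 6, BcSO31 m a d * r m b c) - (∑ m : Fin 6, BcSO31 m b c * r m a d)
  + (∑ m : Fin 6, BcSO31 m b d * r m a c) - (∑ m : Fin 6, BcSO31 m c d * r m a b)

/-- CE differential of a 4-form, evaluated on a basis 5-tuple. -/
noncomputable def d4SO (t : Fin 6 → Fin 6 → Fin 6 → Fin 6 → ℝ) (a b c d e : Fin 6) : ℝ :=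
  -(∑ m : Fin 6, BcSO31 m a b * t m c d e) + (∑ m : Fin 6, BcSO31 m a c * t m b d e)
  - (∑ m : Fin 6, BcSO31 m a d * t m b c e) + (∑ m : Fin 6, BcSO31 m a e * t m b c d)
  - (∑ m : Fin 6, BcSO31 m b c * t m a d e) + (∑ m : Fin 6, BcSO31 m b d * t m a c e)
  - (∑ m : Fin 6, BcSO31 m b e * t m a c d) - (∑ m : Fin 6, BcSO31 m c d * t m a b e)
  + (∑ m : Fin 6, BcSO31 m c e * t m a b d) - (∑ m : Fin 6, BcSO31 m d e * t m a b c)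


section SO31Aux

set_option maxRecDepth 100000
set_option maxHeartbeats 4000000

/-- Integer mirror of `wf`. -/
def wfZ (a b i j : Fin 6) : ℤ :=
  (if a = i then (1:ℤ) else 0) * (if b = j then (1:ℤ) else 0) -
  (if a = j then (1:ℤ) else 0) * (if b = i then (1:ℤ) else 0)

/-- Integer mirror of `tf`. -/
def tfZ (a b c i j k : Fin 6) : ℤ :=
  (if a = i then (1:ℤ) else 0) * ((if b = j then (1:ℤ) else 0) * (if c = k then (1:ℤ) else 0)
      - (if b = k then (1:ℤ) else 0) * (if c = j then (1:ℤ) else 0))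
  - (if a = j then (1:ℤ) else 0) * ((if b = i then (1:ℤ) else 0) * (if c = k then (1:ℤ) else 0)
      - (if b = k then (1:ℤ) else 0) * (if c = i then (1:ℤ) else 0))
  + (if a = k then (1:ℤ) else 0) * ((if b = i then (1:ℤ) else 0) * (if c = j then (1:ℤ) else 0)
      - (if b = j then (1:ℤ) else 0) * (if c = i then (1:ℤ) else 0))

/-- Integer mirror of `dSO31`. -/
def dZ (k i j : Fin 6) : ℤ :=
  if k = 0 then wfZ 1 2 i j - wfZ 4 5 i j
  else if k = 1 then -(wfZ 0 2 i j) + wfZ 3 5 i j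
  else if k = 2 then wfZ 0 1 i j - wfZ 3 4 i j
  else if k = 3 then wfZ 1 5 i j
  else if k = 4 then wfZ 2 3 i j
  else wfZ 0 4 i j

/-- Integer mirror of `BcSO31`. -/
def BcZ (m i j : Fin 6) : ℤ := -(dZ m i j)

/-- Integer mirror of `omSO`. -/
def omZ (i j : Fin 6) : ℤ := wfZ 0 3 i j + wfZ 1 4 i j - wfZ 2 5 i j

/-- Integer mirror of `rhoSO`. -/
def rhoZ (i j k : Fin 6) : ℤ :=
  -(tfZ 0 1 5 i j k) - tfZ 0 2 4 i j k + tfZ 1 2 3 i j k + tfZ 3 4 5 i j k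

/-- Integer values of ω∧ω (shuffle formula already evaluated). -/
def WZ (i j k l : Fin 6) : ℤ :=
  2*(omZ i j * omZ k l - omZ i k * omZ j l + omZ i l * omZ j k)

/-- Integer mirror of `d3SO rhoSO`. -/
def d3Z (a b c d : Fin 6) : ℤ :=
  -(∑ m : Fin 6, BcZ m a b * rhoZ m c d) + (∑ m : Fin 6, BcZ m a c * rhoZ m b d)
  - (∑ m : Fin 6, BcZ m a d * rhoZ m b c) - (∑ m : Fin 6, BcZ m b c * rhoZ m a d)
  + (∑ m : Fin 6, BcZ m b d * rhoZ m a c) - (∑ m : Fin 6, BcZ m c d * rhoZ m a b)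

/-- Integer mirror of `d4SO` applied to `WZ`. -/
def d4Z (a b c d e : Fin 6) : ℤ :=
  -(∑ m : Fin 6, BcZ m a b * WZ m c d e) + (∑ m : Fin 6, BcZ m a c * WZ m b d e)
  - (∑ m : Fin 6, BcZ m a d * WZ m b c e) + (∑ m : Fin 6, BcZ m a e * WZ m b c d)
  - (∑ m : Fin 6, BcZ m b c * WZ m a d e) + (∑ m : Fin 6, BcZ m b d * WZ m a c e)
  - (∑ m : Fin 6, BcZ m b e * WZ m a c d) - (∑ m : Fin 6, BcZ m c d * WZ m a b e)
  + (∑ m : Fin 6, BcZ m c e * WZ m a b d) - (∑ m : Fin 6, BcZ m d e * WZ m a b c)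

lemma wf_cast (a b i j : Fin 6) : wf a b i j = ((wfZ a b i j : ℤ) : ℝ) := by
  simp only [wf, wfZ]
  push_cast [apply_ite (fun z : ℤ => (z : ℝ))]
  ring

lemma tf_cast (a b c i j k : Fin 6) : tf a b c i j k = ((tfZ a b c i j k : ℤ) : ℝ) := by
  simp only [tf, tfZ]
  push_cast [apply_ite (fun z : ℤ => (z : ℝ))]
  ring

lemma d_cast (k i j : Fin 6) : dSO31 k i j = ((dZ k i j : ℤ) : ℝ) := by
  fin_cases k <;> simp [dSO31, dZ, wf_cast]

lemma Bc_cast (m i j : Fin 6) : BcSO31 m i j = ((BcZ m i j : ℤ) : ℝ) := by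
  simp [BcSO31, BcZ, d_cast]

lemma om_cast (i j : Fin 6) : omSO i j = ((omZ i j : ℤ) : ℝ) := by
  simp only [omSO, omZ, wf_cast]
  push_cast
  ring

lemma rho_cast (i j k : Fin 6) : rhoSO i j k = ((rhoZ i j k : ℤ) : ℝ) := by
  simp only [rhoSO, rhoZ, tf_cast]
  push_cast
  ring

lemma omSO_antisymm (i j : Fin 6) : omSO j i = -omSO i j := by
  simp only [omSO, wf]
  ring

/-- Sign helper. -/
def sgnP (x y : Fin 4) : ℤ := if x < y then 1 else if x = y then 0 else -1

/-- Levi-Civita symbol on `Fin 4`. -/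
def epsZ (a b c d : Fin 4) : ℤ :=
  sgnP a b * sgnP a c * sgnP a d * sgnP b c * sgnP b d * sgnP c d

lemma sign_eq_epsZ : ∀ σ : Equiv.Perm (Fin 4),
    ((Equiv.Perm.sign σ : ℤ)) = epsZ (σ 0) (σ 1) (σ 2) (σ 3) := by decide

/-- Shuffle formula for the wedge square of an antisymmetric bilinear evaluation. -/
lemma perm4_sum (g : Fin 4 → Fin 4 → ℝ) (hg : ∀ a b, g b a = -g a b) :
    ∑ σ : Equiv.Perm (Fin 4),
      ((Equiv.Perm.sign σ : ℤ) : ℝ) * g (σ 0) (σ 1) * g (σ 2) (σ 3)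
    = 8 * (g 0 1 * g 2 3 - g 0 2 * g 1 3 + g 0 3 * g 1 2) := by
  have h00 : g 0 0 = 0 := by have := hg 0 0; linarith
  have h11 : g 1 1 = 0 := by have := hg 1 1; linarith
  have h22 : g 2 2 = 0 := by have := hg 2 2; linarith
  have h33 : g 3 3 = 0 := by have := hg 3 3; linarith
  have h10 : g 1 0 = -g 0 1 := hg 0 1
  have h20 : g 2 0 = -g 0 2 := hg 0 2
  have h30 : g 3 0 = -g 0 3 := hg 0 3
  have h21 : g 2 1 = -g 1 2 := hg 1 2
  have h31 : g 3 1 = -g 1 3 := hg 1 3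
  have h32 : g 3 2 = -g 2 3 := hg 2 3
  have key : ∑ σ : Equiv.Perm (Fin 4),
      ((Equiv.Perm.sign σ : ℤ) : ℝ) * g (σ 0) (σ 1) * g (σ 2) (σ 3)
      = ∑ x : Fin 4 × Fin 4 × Fin 4 × Fin 4,
          ((epsZ x.1 x.2.1 x.2.2.1 x.2.2.2 : ℤ) : ℝ) * g x.1 x.2.1 * g x.2.2.1 x.2.2.2 := by
    have hinj : ∀ x ∈ (Finset.univ : Finset (Equiv.Perm (Fin 4))), ∀ y ∈ Finset.univ,
        (fun σ : Equiv.Perm (Fin 4) => (σ 0, σ 1, σ 2, σ 3)) x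
          = (fun σ : Equiv.Perm (Fin 4) => (σ 0, σ 1, σ 2, σ 3)) y → x = y := by decide
    have hzero : ∀ x : Fin 4 × Fin 4 × Fin 4 × Fin 4,
        x ∉ Finset.image (fun σ : Equiv.Perm (Fin 4) => (σ 0, σ 1, σ 2, σ 3)) Finset.univ →
        epsZ x.1 x.2.1 x.2.2.1 x.2.2.2 = 0 := by decide
    rw [show (Finset.univ : Finset (Fin 4 × Fin 4 × Fin 4 × Fin 4)).sum
        (fun x => ((epsZ x.1 x.2.1 x.2.2.1 x.2.2.2 : ℤ) : ℝ) * g x.1 x.2.1 * g x.2.2.1 x.2.2.2)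
      = ∑ x ∈ Finset.image (fun σ : Equiv.Perm (Fin 4) => (σ 0, σ 1, σ 2, σ 3)) Finset.univ,
          ((epsZ x.1 x.2.1 x.2.2.1 x.2.2.2 : ℤ) : ℝ) * g x.1 x.2.1 * g x.2.2.1 x.2.2.2 from
        (Finset.sum_subset (Finset.subset_univ _) (by
          intro x _ hx
          rw [hzero x hx]
          simp)).symm]
    rw [Finset.sum_image hinj]
    refine Finset.sum_congr rfl (fun σ _ => ?_)
    rw [sign_eq_epsZ σ]
  rw [key]
  rw [Fintype.sum_prod_type]
  simp only [Fintype.sum_prod_type, Fin.sum_univ_four]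
  simp (config := { decide := true }) only [epsZ, sgnP, if_true, if_false]
  push_cast
  simp only [h00, h11, h22, h33, h10, h20, h30, h21, h31, h32]
  ring

lemma omom_eq (i j k l : Fin 6) : omomSO i j k l = ((WZ i j k l : ℤ) : ℝ) := by
  unfold omomSO
  rw [perm4_sum (fun a b => omSO (![i,j,k,l] a) (![i,j,k,l] b))
      (fun a b => omSO_antisymm _ _)]
  simp only [Matrix.cons_val_zero, Matrix.cons_val_one, Matrix.head_cons,
    Matrix.cons_val_two, Matrix.cons_val_three, Matrix.tail_cons, WZ, om_cast]
  push_cast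
  ring

lemma d3_cast (a b c d : Fin 6) : d3SO rhoSO a b c d = ((d3Z a b c d : ℤ) : ℝ) := by
  simp only [d3SO, d3Z, Bc_cast, rho_cast]
  push_cast
  ring

lemma d4_cast (a b c d e : Fin 6) : d4SO omomSO a b c d e = ((d4Z a b c d e : ℤ) : ℝ) := by
  simp only [d4SO, d4Z, Bc_cast, omom_eq]
  push_cast
  ring

lemma d3Z_zero : ∀ a b c d : Fin 6, d3Z a b c d = 0 := by decide

lemma d4Z_zero0 : ∀ b c d e : Fin 6, d4Z 0 b c d e = 0 := by decide
lemma d4Z_zero1 : ∀ b c d e : Fin 6, d4Z 1 b c d e = 0 := by decide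
lemma d4Z_zero2 : ∀ b c d e : Fin 6, d4Z 2 b c d e = 0 := by decide
lemma d4Z_zero3 : ∀ b c d e : Fin 6, d4Z 3 b c d e = 0 := by decide
lemma d4Z_zero4 : ∀ b c d e : Fin 6, d4Z 4 b c d e = 0 := by decide
lemma d4Z_zero5 : ∀ b c d e : Fin 6, d4Z 5 b c d e = 0 := by decide

lemma d4Z_zero : ∀ a b c d e : Fin 6, d4Z a b c d e = 0 := by
  intro a
  fin_cases a
  · exact d4Z_zero0
  · exact d4Z_zero1
  · exact d4Z_zero2
  · exact d4Z_zero3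
  · exact d4Z_zero4
  · exact d4Z_zero5

end SO31Aux

/-- On so(3,1): dρ = 0 and d(ω∧ω) = 0. -/
theorem so31_half_flat_pair :
    (∀ a b c d : Fin 6, d3SO rhoSO a b c d = 0) ∧
    (∀ a b c d e : Fin 6, d4SO omomSO a b c d e = 0) := by
  constructor
  · intro a b c d
    rw [d3_cast, d3Z_zero]
    norm_num
  · intro a b c d e
    rw [d4_cast, d4Z_zero]
    norm_num
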